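/- Let B be a nonempty subset of (0,1) that is closed in ℝ and θ-invariant (B = θ(B)), and let ξ₀ ∈ [0,1] with ξ₀ ∉ B. Then there is a constant α > 0 (depending only on B and ξ₀) such that for every sequence x₁,x₂,… ∈ {0,1}, the sample path defined by ξ_t := ξ_{t−1}/2 + x_t/2 satisfies d_B(ξ_t) ≥ α·2^{−t} for all t ≥ 0 and d_{B_e^c}(ξ_t) ≥ α·2^{−t} for all t ≥ 1. -/

import Mathlib

open Set MeasureTheory Filter

open Classical in
/-- The doubling map `θ` on `[0,1)`: `θ(ξ) = 2ξ` for `ξ < 1/2`, `2ξ − 1` otherwise. -/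
noncomputable def theta (ξ : ℝ) : ℝ := if ξ < 1/2 then 2*ξ else 2*ξ - 1

open Classical in
/-- `ξ* = ξ + 1/2` for `ξ ∈ [0,1/2]` and `ξ − 1/2` for `ξ ∈ (1/2,1]`. -/
noncomputable def starR (ξ : ℝ) : ℝ := if ξ ≤ 1/2 then ξ + 1/2 else ξ - 1/2


/-- The exit set `B_e^c = {ξ/2 + j/2 : ξ ∈ B, j ∈ {0,1}} ∩ ([0,1] \ B)`. -/
def BeI (B : Set ℝ) : Set ℝ :=
  {y | ∃ ξ ∈ B, y = ξ/2 ∨ y = ξ/2 + 1/2} ∩ (Set.Icc (0:ℝ) 1 \ B)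

/-- The barrier set `B_b = (B_e^c)*`. -/
noncomputable def BbI (B : Set ℝ) : Set ℝ := starR '' BeI B

private lemma le_infDist' {s : Set ℝ} (hs : s.Nonempty) {x d : ℝ}
    (h : ∀ y ∈ s, d ≤ dist x y) : d ≤ Metric.infDist x s := by
  by_contra hlt
  push_neg at hlt
  obtain ⟨y, hy, hxy⟩ := (Metric.infDist_lt_iff hs).1 hlt
  exact absurd (h y hy) (not_le.2 hxy)

/-- **Lemma.** For a nonempty, closed, `θ`-invariant `B ⊂ (0,1)` and
`ξ₀ ∈ [0,1] \ B`, there is `α > 0` such that every sample path `ξ_t = ξ_{t−1}/2 + x_t/2`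
satisfies `d_B(ξ_t) ≥ α 2^{−t}` for all `t ≥ 0` and `d_{B_e^c}(ξ_t) ≥ α 2^{−t}` for `t ≥ 1`. -/
theorem samplePath_dist_lower_bound (B : Set ℝ) (hne : B.Nonempty)
    (hB : B ⊆ Set.Ioo 0 1) (hcl : IsClosed B) (hinv : B = theta '' B)
    (ξ₀ : ℝ) (hξ₀ : ξ₀ ∈ Set.Icc (0:ℝ) 1) (hξ₀B : ξ₀ ∉ B) :
    ∃ α > (0:ℝ), ∀ (x : ℕ → Fin 2) (path : ℕ → ℝ), path 0 = ξ₀ →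
      (∀ t : ℕ, path (t+1) = path t / 2 + (x (t+1) : ℝ) / 2) →
      (∀ t : ℕ, α * 2 ^ (-(t:ℤ)) ≤ Metric.infDist (path t) B) ∧
      (∀ t : ℕ, 1 ≤ t → α * 2 ^ (-(t:ℤ)) ≤ Metric.infDist (path t) (BeI B)) := by
  classical
  -- the enlarged set: B together with its translates by ±1
  set B3 : Set ℝ := B ∪ ((fun z => z + 1) '' B) ∪ ((fun z => z - 1) '' B) with hB3def
  have hmemB3 : ∀ c ∈ B, c ∈ B3 ∧ c + 1 ∈ B3 ∧ c - 1 ∈ B3 := by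
    intro c hc
    exact ⟨Or.inl (Or.inl hc), Or.inl (Or.inr ⟨c, hc, rfl⟩), Or.inr ⟨c, hc, rfl⟩⟩
  have hB3ne : B3.Nonempty := hne.mono (fun z hz => (hmemB3 z hz).1)
  -- B is compact
  have hBcomp : IsCompact B :=
    (isCompact_Icc (a := (0:ℝ)) (b := 1)).of_isClosed_subset hcl
      (hB.trans Set.Ioo_subset_Icc_self)
  have hB3cl : IsClosed B3 := by
    refine IsClosed.union (IsClosed.union hcl ?_) ?_
    · exact (hBcomp.image (continuous_id.add continuous_const)).isClosed
    · exact (hBcomp.image (continuous_id.sub continuous_const)).isClosed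
  -- θ maps B to B
  have hθ : ∀ b ∈ B, theta b ∈ B := by
    intro b hb
    rw [hinv]
    exact ⟨b, hb, rfl⟩
  -- key distance facts
  have hnear : ∀ ξ : ℝ, ∀ z ∈ B3, Metric.infDist ξ B3 ≤ dist ξ z :=
    fun ξ z hz => Metric.infDist_le_dist_of_mem hz
  have hfar : ∀ ξ : ℝ, ξ ∈ Icc (0:ℝ) 1 → ∀ c ∈ B, ∀ m : ℝ, 2 ≤ |m| →
      Metric.infDist ξ B3 ≤ dist ξ (c + m) := by
    intro ξ hξ c hc m hm
    have hc' := hB hc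
    have h1 : Metric.infDist ξ B3 ≤ dist ξ c := hnear ξ c (hmemB3 c hc).1
    have h2 : dist ξ c ≤ 1 := by
      rw [Real.dist_eq, abs_le]
      constructor <;> [linarith [hξ.1, hc'.2]; linarith [hξ.2, hc'.1]]
    have h3 : (1:ℝ) ≤ dist ξ (c + m) := by
      rw [Real.dist_eq]
      rcases le_or_gt 0 m with hm0 | hm0
      · rw [abs_of_nonneg hm0] at hm
        exact le_abs.2 (Or.inr (by linarith [hξ.2, hc'.1]))
      · rw [abs_of_neg hm0] at hm
        exact le_abs.2 (Or.inl (by linarith [hξ.1, hc'.2]))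
    linarith
  -- the shifted points around an element of B are close to B3
  have hnearB : ∀ ξ : ℝ, ∀ c ∈ B, ∀ m : ℝ, (m = -1 ∨ m = 0 ∨ m = 1) →
      Metric.infDist ξ B3 ≤ dist ξ (c + m) := by
    intro ξ c hc m hm
    obtain ⟨h1, h2, h3⟩ := hmemB3 c hc
    rcases hm with rfl | rfl | rfl
    · simpa [sub_eq_add_neg] using hnear ξ (c - 1) h3
    · simpa using hnear ξ c h1
    · exact hnear ξ (c + 1) h2
  -- half-distance rewriting
  have hdist2 : ∀ ξ j z : ℝ, dist (ξ / 2 + j / 2) z = dist ξ (2 * z - j) / 2 := by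
    intro ξ j z
    rw [Real.dist_eq, Real.dist_eq]
    rw [show ξ / 2 + j / 2 - z = (ξ - (2 * z - j)) / 2 by ring]
    rw [abs_div]
    norm_num
  -- one-step recursion for B3
  have hstep : ∀ ξ : ℝ, ξ ∈ Icc (0:ℝ) 1 → ∀ j : ℝ, (j = 0 ∨ j = 1) →
      ∀ y ∈ B3, Metric.infDist ξ B3 / 2 ≤ dist (ξ / 2 + j / 2) y := by
    intro ξ hξ j hj y hy
    rw [hdist2]
    rw [div_le_div_iff_of_pos_right (by norm_num : (0:ℝ) < 2)]
    -- y = b + k with b ∈ B, k ∈ {-1,0,1}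
    obtain ⟨b, hb, k, hk, rfl⟩ : ∃ b ∈ B, ∃ k : ℝ, (k = -1 ∨ k = 0 ∨ k = 1) ∧ y = b + k := by
      rcases hy with (hy | ⟨b, hb, rfl⟩) | ⟨b, hb, rfl⟩
      · exact ⟨y, hy, 0, Or.inr (Or.inl rfl), by ring⟩
      · exact ⟨b, hb, 1, Or.inr (Or.inr rfl), rfl⟩
      · exact ⟨b, hb, -1, Or.inl rfl, by ring⟩
    -- θ b ∈ B and 2b = θ b + e with e ∈ {0,1}
    set c := theta b with hcdef
    have hcB : c ∈ B := hθ b hb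
    have h2b : ∃ e : ℝ, (e = 0 ∨ e = 1) ∧ 2 * b = c + e := by
      rw [hcdef, theta]
      split
      · exact ⟨0, Or.inl rfl, by ring⟩
      · exact ⟨1, Or.inr rfl, by ring⟩
    obtain ⟨e, he, h2b⟩ := h2b
    have hboth : ∀ m : ℝ,
        (m = -3 ∨ m = -2 ∨ m = -1 ∨ m = 0 ∨ m = 1 ∨ m = 2 ∨ m = 3) →
        Metric.infDist ξ B3 ≤ dist ξ (c + m) := by
      intro m hm
      rcases hm with rfl | rfl | rfl | rfl | rfl | rfl | rfl
      · exact hfar ξ hξ c hcB (-3) (by norm_num)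
      · exact hfar ξ hξ c hcB (-2) (by norm_num)
      · exact hnearB ξ c hcB (-1) (by norm_num)
      · exact hnearB ξ c hcB 0 (by norm_num)
      · exact hnearB ξ c hcB 1 (by norm_num)
      · exact hfar ξ hξ c hcB 2 (by norm_num)
      · exact hfar ξ hξ c hcB 3 (by norm_num)
    have heq : 2 * (b + k) - j = c + (e + 2 * k - j) := by linarith
    rw [heq]
    rcases he with rfl | rfl <;> rcases hk with rfl | rfl | rfl <;> rcases hj with rfl | rfl <;>
      exact hboth _ (by norm_num)
  -- one-step bound for the exit set
  have hstepE : ∀ ξ : ℝ, ∀ j : ℝ, (j = 0 ∨ j = 1) →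
      ∀ y ∈ BeI B, Metric.infDist ξ B3 / 2 ≤ dist (ξ / 2 + j / 2) y := by
    intro ξ j hj y hy
    obtain ⟨⟨b, hb, hy'⟩, -⟩ := hy
    rw [hdist2]
    rw [div_le_div_iff_of_pos_right (by norm_num : (0:ℝ) < 2)]
    rcases hy' with rfl | rfl <;> rcases hj with rfl | rfl
    · rw [show 2 * (b / 2) - 0 = b + 0 by ring]
      exact hnearB ξ b hb 0 (by norm_num)
    · rw [show 2 * (b / 2) - 1 = b + (-1) by ring]
      exact hnearB ξ b hb (-1) (by norm_num)
    · rw [show 2 * (b / 2 + 1/2) - 0 = b + 1 by ring]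
      exact hnearB ξ b hb 1 (by norm_num)
    · rw [show 2 * (b / 2 + 1/2) - 1 = b + 0 by ring]
      exact hnearB ξ b hb 0 (by norm_num)
  -- the exit set is nonempty
  have hBene : (BeI B).Nonempty := by
    rcases Set.eq_empty_or_nonempty (BeI B) with hE | hE
    · exfalso
      have hhalf : ∀ c ∈ B, c / 2 ∈ B := by
        intro c hc
        have hc' := hB hc
        by_contra hnot
        have : c / 2 ∈ BeI B := by
          refine ⟨⟨c, hc, Or.inl rfl⟩, ⟨⟨by linarith [hc'.1], by linarith [hc'.2]⟩, hnot⟩⟩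
        rw [hE] at this
        exact this
      obtain ⟨b, hb⟩ := hne
      have hseq : ∀ n : ℕ, b / 2 ^ n ∈ B := by
        intro n
        induction n with
        | zero => simpa using hb
        | succ n ih =>
            have := hhalf _ ih
            rw [show b / 2 ^ n / 2 = b / 2 ^ (n + 1) by rw [pow_succ]; ring] at this
            exact this
      have hlim : Tendsto (fun n : ℕ => b / 2 ^ n) atTop (nhds 0) := by
        have h0 : Tendsto (fun n : ℕ => ((1:ℝ)/2) ^ n) atTop (nhds 0) :=
          tendsto_pow_atTop_nhds_zero_of_lt_one (by norm_num) (by norm_num)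
        have := h0.const_mul b
        simpa [div_eq_mul_inv, mul_comm, inv_pow] using this
      have h0B : (0:ℝ) ∈ B := hcl.mem_of_tendsto hlim (Filter.Eventually.of_forall hseq)
      exact absurd (hB h0B).1 (lt_irrefl 0)
    · exact hE
  -- ξ₀ ∉ B3
  have hξ₀B3 : ξ₀ ∉ B3 := by
    rintro ((h | ⟨b, hb, hb'⟩) | ⟨b, hb, hb'⟩)
    · exact hξ₀B h
    · have := (hB hb).1
      simp only at hb'
      linarith [hξ₀.2]
    · have := (hB hb).2
      simp only at hb'
      linarith [hξ₀.1]
  set α := Metric.infDist ξ₀ B3 with hαdef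
  have hαpos : 0 < α := (hB3cl.notMem_iff_infDist_pos hB3ne).1 hξ₀B3
  refine ⟨α, hαpos, ?_⟩
  intro x path h0 hrec
  -- path stays in [0,1]
  have hmem : ∀ t, path t ∈ Icc (0:ℝ) 1 := by
    intro t
    induction t with
    | zero => rw [h0]; exact hξ₀
    | succ t ih =>
        rw [hrec t]
        have hx : (0:ℝ) ≤ (x (t+1) : ℝ) ∧ ((x (t+1) : ℝ)) ≤ 1 := by
          have h2 : (x (t+1)).val < 2 := (x (t+1)).isLt
          constructor
          · positivity
          · exact_mod_cast Nat.lt_succ_iff.mp h2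
        exact ⟨by linarith [ih.1, hx.1], by linarith [ih.2, hx.2]⟩
  have hdigit : ∀ t : ℕ, ((x (t+1) : ℝ) = 0 ∨ (x (t+1) : ℝ) = 1) := by
    intro t
    have h2 : (x (t+1)).val < 2 := (x (t+1)).isLt
    have h3 : (x (t+1)).val = 0 ∨ (x (t+1)).val = 1 := by omega
    rcases h3 with h | h
    · left; exact_mod_cast h
    · right; exact_mod_cast h
  -- main induction on distance to B3
  have hD : ∀ t : ℕ, α * 2 ^ (-(t:ℤ)) ≤ Metric.infDist (path t) B3 := by
    intro t
    induction t with
    | zero => simp [h0]; exact le_rfl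
    | succ t ih =>
        have hs : Metric.infDist (path t) B3 / 2 ≤ Metric.infDist (path (t+1)) B3 := by
          refine le_infDist' hB3ne ?_
          intro y hy
          rw [hrec t]
          exact hstep (path t) (hmem t) _ (hdigit t) y hy
        have h2 : α * 2 ^ (-((t:ℤ)+1)) = α * 2 ^ (-(t:ℤ)) / 2 := by
          rw [show -((t:ℤ)+1) = -(t:ℤ) + (-1) by ring, zpow_add₀ (by norm_num : (2:ℝ) ≠ 0)]
          norm_num; ring
        push_cast
        rw [h2]
        linarith
  constructor
  · intro t
    calc α * 2 ^ (-(t:ℤ)) ≤ Metric.infDist (path t) B3 := hD t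
      _ ≤ Metric.infDist (path t) B :=
        Metric.infDist_le_infDist_of_subset (fun z hz => (hmemB3 z hz).1) hne
  · intro t ht
    obtain ⟨s, rfl⟩ := Nat.exists_eq_add_of_le ht
    rw [add_comm 1 s]
    have hs : Metric.infDist (path s) B3 / 2 ≤ Metric.infDist (path (s+1)) (BeI B) := by
      refine le_infDist' hBene ?_
      intro y hy
      rw [hrec s]
      exact hstepE (path s) _ (hdigit s) y hy
    have h2 : α * 2 ^ (-((s:ℤ)+1)) = α * 2 ^ (-(s:ℤ)) / 2 := by
      rw [show -((s:ℤ)+1) = -(s:ℤ) + (-1) by ring, zpow_add₀ (by norm_num : (2:ℝ) ≠ 0)]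
      norm_num; ring
    push_cast
    rw [h2]
    linarith [hD s]
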